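/- For every integer constant c > 1 there exist a constant C > 0, an oracle A assigning to every feasible port-numbered graph a binary advice string, and a function f, such that for every feasible port-numbered graph G of diameter D and election index φ: the advice length |A(G)| is at most C·(1 + log(1 + log(1 + log φ))), and the assignment v ↦ f(A(G), B^{D+φ^c}(v)) is a leader election output for G. That is, leader election in time at most D + φ^c can be achieved with O(log log log φ) bits of advice. -/

import Mathlib

namespace Election

/-- A port-numbered graph: a simple undirected connected graph on `n ≥ 3` unlabeled nodes
(vertex set `Fin n`) in which, at each node `v` of degree `d`, the edges incident to `v`
carry distinct port numbers `0, …, d-1` at `v`. `portNum v u` is the port number at `v`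
of the edge `{v, u}` (meaningful only when `v` and `u` are adjacent). -/
structure PortGraph where
  n : ℕ
  three_le : 3 ≤ n
  G : SimpleGraph (Fin n)
  conn : G.Connected
  portNum : Fin n → Fin n → ℕ
  port_lt : ∀ v u : Fin n, G.Adj v u → portNum v u < Nat.card {w : Fin n // G.Adj v w}
  port_inj : ∀ v u w : Fin n, G.Adj v u → G.Adj v w → portNum v u = portNum v w → u = w

namespace PortGraph

/-- The degree of a node. -/
noncomputable def degree (PG : PortGraph) (v : Fin PG.n) : ℕ :=
  Nat.card {w : Fin PG.n // PG.G.Adj v w}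

open Classical in
/-- The neighbor of `v` reached through port `p` (junk value `v` if there is none). -/
noncomputable def nbr (PG : PortGraph) (v : Fin PG.n) (p : ℕ) : Fin PG.n :=
  if h : ∃ u : Fin PG.n, PG.G.Adj v u ∧ PG.portNum v u = p then h.choose else v

/-- Abstract (augmented truncated) views: a view at depth `0` is a leaf carrying a degree;
a view at depth `ℓ+1` is a node whose children are listed in the order of the port numbers
`0, …, d-1` at the root, each child carrying the port number at the other endpoint of the
corresponding edge together with the subview at depth `ℓ`. -/
inductive AugView : Type
  | leaf (deg : ℕ) : AugView
  | node (children : List (ℕ × AugView)) : AugView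

/-- The augmented truncated view `B^ℓ(v)` of node `v` at depth `ℓ`. -/
noncomputable def augView (PG : PortGraph) : ℕ → Fin PG.n → AugView
  | 0, v => AugView.leaf (PG.degree v)
  | (ℓ + 1), v => AugView.node ((List.range (PG.degree v)).map
      fun p => (PG.portNum (PG.nbr v p) v, PG.augView ℓ (PG.nbr v p)))

/-- `IsPath PG v s vs` means: the sequence `s = (p₁, q₁, …, p_k, q_k)` of port numbers codes
a path in `PG` starting at `v` whose i-th edge carries port `p_i` at the endpoint closer to
`v` and `q_i` at the other endpoint, and `vs` is the list of visited vertices (from `v` on). -/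
inductive IsPath (PG : PortGraph) : Fin PG.n → List ℕ → List (Fin PG.n) → Prop
  | nil (v : Fin PG.n) : IsPath PG v [] [v]
  | cons (v u : Fin PG.n) (p q : ℕ) (rest : List ℕ) (vs : List (Fin PG.n))
      (hadj : PG.G.Adj v u) (hp : PG.portNum v u = p) (hq : PG.portNum u v = q)
      (htail : IsPath PG u rest vs) : IsPath PG v (p :: q :: rest) (v :: vs)

/-- `P` is a leader election output for `PG`: every node `v` outputs a sequence of port
numbers coding a simple path starting at `v`, and all these paths end at a common node. -/
def IsLeaderElection (PG : PortGraph) (P : Fin PG.n → List ℕ) : Prop :=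
  ∃ leader : Fin PG.n, ∀ v : Fin PG.n, ∃ vs : List (Fin PG.n),
    PG.IsPath v (P v) vs ∧ vs.Nodup ∧ vs.getLast? = some leader

/-- A graph is feasible if at some depth all augmented truncated views are pairwise distinct. -/
def Feasible (PG : PortGraph) : Prop :=
  ∃ ℓ : ℕ, Function.Injective (PG.augView ℓ)

/-- The election index: the smallest depth at which all augmented truncated views are distinct. -/
noncomputable def electionIndex (PG : PortGraph) : ℕ :=
  sInf {ℓ : ℕ | Function.Injective (PG.augView ℓ)}

/-- The diameter: the maximum distance between two nodes. -/
noncomputable def diam (PG : PortGraph) : ℕ :=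
  sSup (Set.range fun p : Fin PG.n × Fin PG.n => PG.G.dist p.1 p.2)

end PortGraph



/-! ### Auxiliary development -/

/-- Decode a little-endian binary string. -/
def dec : List Bool → ℕ
  | [] => 0
  | b :: l => 2 * dec l + (if b then 1 else 0)

/-- Encode a natural number in little-endian binary. -/
def enc : ℕ → List Bool
  | 0 => []
  | (n+1) => (((n+1) % 2 == 1) : Bool) :: enc ((n+1)/2)
decreasing_by exact Nat.div_lt_self (Nat.succ_pos n) one_lt_two

lemma dec_enc : ∀ a, dec (enc a) = a := by
  intro a
  induction a using Nat.strong_induction_on with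
  | _ a ih =>
    match a with
    | 0 => simp [enc, dec]
    | (n+1) =>
      rw [enc, dec, ih ((n+1)/2) (Nat.div_lt_self (Nat.succ_pos n) one_lt_two)]
      rcases Nat.mod_two_eq_zero_or_one (n+1) with h | h <;> simp [h] <;> omega

lemma enc_length_le : ∀ (k a : ℕ), a < 2 ^ k → (enc a).length ≤ k := by
  intro k
  induction k with
  | zero => intro a ha; interval_cases a; simp [enc]
  | succ k ih =>
    intro a ha
    match a with
    | 0 => simp [enc]
    | (n+1) =>
      rw [enc]
      have h2 : (2:ℕ) ^ (k+1) = 2 * 2 ^ k := by ring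
      have : (n+1)/2 < 2 ^ k := by omega
      simpa using ih _ this

lemma exists_tower (φ : ℕ) : ∃ m, φ ≤ 2 ^ 2 ^ m := by
  refine ⟨φ, ?_⟩
  have h1 : φ ≤ 2 ^ φ := (Nat.lt_two_pow_self (n := φ)).le
  exact h1.trans (Nat.pow_le_pow_right (by norm_num) h1)

/-- The natural number communicated as advice. -/
noncomputable def adviceNat (φ : ℕ) : ℕ :=
  if φ ≤ 1 then φ else Nat.find (exists_tower φ) + 2

/-- Decoding the advice into the depth `α`. -/
def decA : ℕ → ℕ
  | 0 => 0
  | 1 => 1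
  | (m+2) => 2 ^ 2 ^ m

lemma le_decA (φ : ℕ) : φ ≤ decA (adviceNat φ) := by
  rw [adviceNat]
  split
  · match φ, ‹φ ≤ 1› with
    | 0, _ => simp [decA]
    | 1, _ => simp [decA]
  · exact Nat.find_spec (exists_tower φ)

lemma decA_le (φ c : ℕ) (hc : 2 ≤ c) : decA (adviceNat φ) ≤ φ ^ c := by
  rw [adviceNat]
  split
  · match φ, ‹φ ≤ 1› with
    | 0, _ => simp [decA, Nat.zero_pow (show 0 < c by omega)]
    | 1, _ => simp [decA]
  · rename_i hφ
    push_neg at hφ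
    have hφ2 : 2 ≤ φ := hφ
    show decA (Nat.find (exists_tower φ) + 2) ≤ φ ^ c
    rw [decA]
    set m := Nat.find (exists_tower φ) with hm
    match hm' : m with
    | 0 =>
      calc 2 ^ 2 ^ 0 = 2 := by norm_num
      _ ≤ φ := hφ2
      _ ≤ φ ^ c := Nat.le_self_pow (by omega) φ
    | (m'+1) =>
      have hmin : ¬ (φ ≤ 2 ^ 2 ^ m') := by
        have := Nat.find_min (exists_tower φ) (m := m') (by omega)
        exact this
      push_neg at hmin
      have h1 : 2 ^ 2 ^ m' ≤ φ - 1 := by omega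
      have h2 : (2:ℕ) ^ 2 ^ (m'+1) = (2 ^ 2 ^ m') ^ 2 := by
        rw [Nat.pow_succ, Nat.pow_mul]
      calc (2:ℕ) ^ 2 ^ (m'+1) = (2 ^ 2 ^ m') ^ 2 := h2
      _ ≤ (φ - 1) ^ 2 := Nat.pow_le_pow_left h1 2
      _ ≤ φ ^ 2 := Nat.pow_le_pow_left (by omega) 2
      _ ≤ φ ^ c := Nat.pow_le_pow_right (by omega) hc

lemma adviceNat_length (φ : ℕ) :
    ((enc (adviceNat φ)).length : ℝ) ≤
      10 * (1 + Real.logb 2 (1 + Real.logb 2 (1 + Real.logb 2 (φ:ℝ)))) := by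
  have hX : 0 ≤ Real.logb 2 (φ:ℝ) := by
    rcases Nat.eq_zero_or_pos φ with h | h
    · simp [h]
    · exact Real.logb_nonneg one_lt_two (by exact_mod_cast h)
  have hY : 0 ≤ Real.logb 2 (1 + Real.logb 2 (φ:ℝ)) :=
    Real.logb_nonneg one_lt_two (by linarith)
  have hZ : 0 ≤ Real.logb 2 (1 + Real.logb 2 (1 + Real.logb 2 (φ:ℝ))) :=
    Real.logb_nonneg one_lt_two (by linarith)
  by_cases hφ : φ ≤ 2
  · have ha : adviceNat φ ≤ 2 := by
      rw [adviceNat]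
      split
      · omega
      · have h2 : φ = 2 := by omega
        have : Nat.find (exists_tower φ) = 0 := by
          rw [Nat.find_eq_zero]
          subst h2; norm_num
        omega
    have hlen : (enc (adviceNat φ)).length ≤ 2 :=
      enc_length_le 2 _ (by omega)
    have : ((enc (adviceNat φ)).length : ℝ) ≤ 2 := by exact_mod_cast hlen
    linarith
  · push_neg at hφ
    have hφ3 : 3 ≤ φ := hφ
    have hadv : adviceNat φ = Nat.find (exists_tower φ) + 2 := by
      rw [adviceNat]; split; omega; rfl
    set m := Nat.find (exists_tower φ) with hm
    have hm1 : 1 ≤ m := by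
      by_contra h
      push_neg at h
      interval_cases m
      · have := Nat.find_spec (exists_tower φ)
        rw [← hm] at this
        norm_num at this
        omega
    have hmin : 2 ^ 2 ^ (m-1) < φ := by
      have := Nat.find_min (exists_tower φ) (m := m - 1) (by omega)
      omega
    have hlogφ : 1 ≤ Nat.log 2 φ := Nat.log_pos (by norm_num) (by omega)
    have h2 : 2 ^ (m-1) ≤ Nat.log 2 φ :=
      (Nat.le_log_iff_pow_le (by norm_num) (by omega)).2 hmin.le
    have h3 : m - 1 ≤ Nat.log 2 (Nat.log 2 φ) :=
      (Nat.le_log_iff_pow_le (by norm_num) (by omega)).2 h2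
    set t := Nat.log 2 (Nat.log 2 φ) with ht
    have hmt : m ≤ t + 1 := by omega
    have hlen : (enc (adviceNat φ)).length ≤ Nat.log 2 (m+2) + 1 := by
      rw [hadv]
      exact enc_length_le _ _ (Nat.lt_pow_succ_log_self (by norm_num) _)
    have hlog2 : Nat.log 2 (m+2) ≤ Nat.log 2 (t+3) :=
      Nat.log_mono_right (by omega)
    -- pass to the reals
    have c1 : ((Nat.log 2 (t+3) : ℕ) : ℝ) ≤ Real.logb 2 ((t:ℝ)+3) := by
      have := Real.natLog_le_logb (t+3) 2
      push_cast at this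
      exact this
    have c2 : Real.logb 2 ((t:ℝ)+3) ≤ Real.logb 2 (4*((t:ℝ)+1)) := by
      refine Real.logb_le_logb_of_le one_lt_two (by positivity) ?_
      nlinarith [Nat.cast_nonneg (α := ℝ) t]
    have c3 : Real.logb 2 (4*((t:ℝ)+1)) = 2 + Real.logb 2 ((t:ℝ)+1) := by
      rw [Real.logb_mul (by norm_num) (by positivity)]
      have : Real.logb 2 4 = 2 := by
        rw [show (4:ℝ) = 2^(2:ℕ) by norm_num, Real.logb_pow,
          Real.logb_self_eq_one one_lt_two]
        norm_num
      rw [this]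
    have c4 : ((t:ℕ) : ℝ) ≤ Real.logb 2 (1 + Real.logb 2 (φ:ℝ)) := by
      have d1 : ((t:ℕ) : ℝ) ≤ Real.logb 2 ((Nat.log 2 φ : ℕ) : ℝ) := by
        rw [ht]
        have := Real.natLog_le_logb (Nat.log 2 φ) 2
        push_cast at this
        exact this
      have d2 : ((Nat.log 2 φ : ℕ) : ℝ) ≤ 1 + Real.logb 2 (φ:ℝ) := by
        have := Real.natLog_le_logb φ 2
        push_cast at this
        linarith
      have d3 : Real.logb 2 ((Nat.log 2 φ : ℕ) : ℝ) ≤ Real.logb 2 (1 + Real.logb 2 (φ:ℝ)) := by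
        exact Real.logb_le_logb_of_le one_lt_two (by exact_mod_cast hlogφ) d2
      linarith
    have c5 : Real.logb 2 ((t:ℝ)+1) ≤ Real.logb 2 (1 + Real.logb 2 (1 + Real.logb 2 (φ:ℝ))) := by
      exact Real.logb_le_logb_of_le one_lt_two (by positivity) (by linarith)
    have hlenR : ((enc (adviceNat φ)).length : ℝ) ≤ ((Nat.log 2 (t+3) : ℕ) : ℝ) + 1 := by
      have : (enc (adviceNat φ)).length ≤ Nat.log 2 (t+3) + 1 := by omega
      exact_mod_cast this
    linarith


namespace PortGraph

/-! ### Operations on views -/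

/-- The children of a view. -/
def kids : AugView → List (ℕ × AugView)
  | .leaf _ => []
  | .node cs => cs

/-- Truncation of a view to a smaller depth. -/
def trunc : ℕ → AugView → AugView
  | 0, .leaf d => .leaf d
  | 0, .node cs => .leaf cs.length
  | (k+1), .leaf d => .leaf d
  | (k+1), .node cs => .node (cs.map fun c => (c.1, trunc k c.2))

/-- All subviews rooted at depth at most `k`. -/
def subsUpTo : ℕ → AugView → List AugView
  | 0, t => [t]
  | (k+1), t => t :: (kids t).flatMap (fun c => subsUpTo k c.2)

/-- The length of the leftmost branch of a view. -/
def lheight : AugView → ℕ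
  | .leaf _ => 0
  | .node [] => 0
  | .node ((_, t) :: _) => lheight t + 1

open Classical in
/-- Search for a node at depth exactly `d` whose `α`-truncation is `target`;
return the port sequence leading to it. -/
noncomputable def searchAt (α : ℕ) (target : AugView) : ℕ → AugView → Option (List ℕ)
  | 0, t => if trunc α t = target then some [] else none
  | (d+1), t => (List.range (kids t).length).findSome? fun p =>
      (searchAt α target d ((kids t).getD p (0, .leaf 0)).2).map
        (fun r => p :: ((kids t).getD p (0, .leaf 0)).1 :: r)

open Classical in
/-- The algorithm run by every node: from the advice, decode `α`; compute the list of
`α`-truncations of all subviews at depth at most `lheight t - α`; elect as leader the node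
whose `α`-view is minimal in a fixed well-ordering of all views, and output the port
sequence of a shortest path to it inside the view. -/
noncomputable def run (adv : List Bool) (t : AugView) : List ℕ :=
  if h : {x : AugView | x ∈ (subsUpTo (lheight t - decA (dec adv)) t).map
      (trunc (decA (dec adv)))}.Nonempty then
    ((List.range (lheight t - decA (dec adv) + 1)).findSome? fun d =>
        searchAt (decA (dec adv))
          (WellFounded.min (IsWellFounded.wf (r := (WellOrderingRel : AugView → AugView → Prop)))
            {x : AugView | x ∈ (subsUpTo (lheight t - decA (dec adv)) t).map
              (trunc (decA (dec adv)))} h) d t).getD []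
  else []

open Classical in
lemma run_eq (adv : List Bool) (t : AugView) (α k : ℕ) (hα : decA (dec adv) = α)
    (hk : lheight t - α = k) (S : Set AugView)
    (hS : {x : AugView | x ∈ (subsUpTo k t).map (trunc α)} = S) (hne : S.Nonempty) :
    run adv t = ((List.range (k + 1)).findSome? fun d =>
      searchAt α (WellFounded.min
        (IsWellFounded.wf (r := (WellOrderingRel : AugView → AugView → Prop))) S hne)
        d t).getD [] := by
  subst hα
  subst hk
  subst hS
  rw [run, dif_pos hne]

variable (PG : PortGraph)

/-! ### Basic graph lemmas -/

lemma exists_adj (v : Fin PG.n) : ∃ u, PG.G.Adj v u := by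
  have h2 : 1 < Fintype.card (Fin PG.n) := by
    simpa using lt_of_lt_of_le (by norm_num) PG.three_le
  obtain ⟨w, hw⟩ := Fintype.exists_ne_of_one_lt_card h2 v
  obtain ⟨p⟩ := PG.conn.preconnected v w
  cases p with
  | nil => exact absurd rfl hw
  | cons h _ => exact ⟨_, h⟩

lemma degree_pos (v : Fin PG.n) : 0 < PG.degree v := by
  obtain ⟨u, hu⟩ := PG.exists_adj v
  haveI : Nonempty {w : Fin PG.n // PG.G.Adj v w} := ⟨⟨u, hu⟩⟩
  exact Nat.card_pos

lemma exists_portNum (v : Fin PG.n) (p : ℕ) (hp : p < PG.degree v) :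
    ∃ u, PG.G.Adj v u ∧ PG.portNum v u = p := by
  classical
  let F : {w : Fin PG.n // PG.G.Adj v w} → Fin (PG.degree v) :=
    fun w => ⟨PG.portNum v w, PG.port_lt v w w.2⟩
  have hinj : Function.Injective F := fun a b hab =>
    Subtype.ext (PG.port_inj v a b a.2 b.2 (congrArg Fin.val hab))
  have hcard : Nat.card {w : Fin PG.n // PG.G.Adj v w} = Nat.card (Fin (PG.degree v)) := by
    simp [degree]
  have hbij : Function.Bijective F :=
    (Nat.bijective_iff_injective_and_card F).2 ⟨hinj, hcard⟩
  obtain ⟨u, hu⟩ := hbij.2 ⟨p, hp⟩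
  exact ⟨u.1, u.2, congrArg Fin.val hu⟩

lemma nbr_spec (v : Fin PG.n) (p : ℕ) (hp : p < PG.degree v) :
    PG.G.Adj v (PG.nbr v p) ∧ PG.portNum v (PG.nbr v p) = p := by
  have h := PG.exists_portNum v p hp
  simp only [nbr]
  rw [dif_pos h]
  exact h.choose_spec

lemma nbr_portNum (v u : Fin PG.n) (h : PG.G.Adj v u) :
    PG.nbr v (PG.portNum v u) = u := by
  have hex : ∃ w, PG.G.Adj v w ∧ PG.portNum v w = PG.portNum v u := ⟨u, h, rfl⟩
  simp only [nbr]
  rw [dif_pos hex]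
  exact PG.port_inj v _ u hex.choose_spec.1 h hex.choose_spec.2

lemma portNum_lt (v u : Fin PG.n) (h : PG.G.Adj v u) :
    PG.portNum v u < PG.degree v := PG.port_lt v u h

lemma dist_le_diam (u w : Fin PG.n) : PG.G.dist u w ≤ PG.diam :=
  le_csSup (Set.Finite.bddAbove (Set.finite_range _)) ⟨(u, w), rfl⟩

lemma exists_adj_dist (v u : Fin PG.n) (j : ℕ) (h : PG.G.dist v u = j + 1) :
    ∃ w, PG.G.Adj v w ∧ PG.G.dist w u = j := by
  obtain ⟨p, hp⟩ := PG.conn.exists_walk_length_eq_dist v u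
  cases p with
  | nil =>
    rw [SimpleGraph.dist_self] at h
    exact absurd h (by simp)
  | @cons _ w _ hadj q =>
    refine ⟨w, hadj, ?_⟩
    have hq : q.length = j := by
      have := hp
      simp only [SimpleGraph.Walk.length_cons] at this
      omega
    have h1 : PG.G.dist w u ≤ j := hq ▸ SimpleGraph.dist_le q
    have h2 : PG.G.dist v w ≤ 1 := by
      have := SimpleGraph.dist_le (SimpleGraph.Walk.cons hadj SimpleGraph.Walk.nil)
      simpa using this
    have h3 : PG.G.dist v u ≤ PG.G.dist v w + PG.G.dist w u := PG.conn.dist_triangle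
    omega

/-! ### Views vs. truncation -/

lemma trunc_augView : ∀ (ℓ' ℓ : ℕ) (v : Fin PG.n), ℓ' ≤ ℓ →
    trunc ℓ' (PG.augView ℓ v) = PG.augView ℓ' v := by
  intro ℓ'
  induction ℓ' with
  | zero =>
    intro ℓ v _
    cases ℓ with
    | zero => simp [augView, trunc]
    | succ m => simp [augView, trunc]
  | succ j ih =>
    intro ℓ v h
    obtain ⟨m, rfl⟩ : ∃ m, ℓ = m + 1 := ⟨ℓ - 1, by omega⟩
    simp only [augView, trunc, List.map_map]
    congr 1
    apply List.map_congr_left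
    intro p _
    simp only [Function.comp_apply]
    rw [ih m (PG.nbr v p) (by omega)]

lemma injective_mono {ℓ ℓ' : ℕ} (hle : ℓ ≤ ℓ')
    (h : Function.Injective (PG.augView ℓ)) : Function.Injective (PG.augView ℓ') :=
  fun u w huw => h (by
    rw [← PG.trunc_augView ℓ ℓ' u hle, ← PG.trunc_augView ℓ ℓ' w hle, huw])

lemma lheight_augView : ∀ (ℓ : ℕ) (v : Fin PG.n), lheight (PG.augView ℓ v) = ℓ := by
  intro ℓ
  induction ℓ with
  | zero => intro v; simp [augView, lheight]
  | succ m ih =>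
    intro v
    obtain ⟨d', hd'⟩ : ∃ d', PG.degree v = d' + 1 :=
      ⟨PG.degree v - 1, by have := PG.degree_pos v; omega⟩
    rw [augView, hd', List.range_succ_eq_map, List.map_cons, lheight, ih]

lemma kids_augView (ℓ : ℕ) (v : Fin PG.n) :
    kids (PG.augView (ℓ+1) v) = (List.range (PG.degree v)).map
      fun p => (PG.portNum (PG.nbr v p) v, PG.augView ℓ (PG.nbr v p)) := by
  rw [augView, kids]

/-! ### Subview lemmas -/

lemma self_mem_subsUpTo (k : ℕ) (t : AugView) : t ∈ subsUpTo k t := by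
  cases k <;> simp [subsUpTo]

lemma mem_subsUpTo_step {s : AugView} {c : ℕ × AugView} {k : ℕ} {t : AugView}
    (hc : c ∈ kids t) (hs : s ∈ subsUpTo k c.2) : s ∈ subsUpTo (k+1) t := by
  rw [subsUpTo]
  exact List.mem_cons.2 (Or.inr (List.mem_flatMap.2 ⟨c, hc, hs⟩))

lemma subsUpTo_subset : ∀ (k ℓ : ℕ) (v : Fin PG.n) (s : AugView), k ≤ ℓ →
    s ∈ subsUpTo k (PG.augView ℓ v) → ∃ d u, d ≤ k ∧ s = PG.augView (ℓ - d) u := by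
  intro k
  induction k with
  | zero =>
    intro ℓ v s _ hs
    simp only [subsUpTo, List.mem_singleton] at hs
    exact ⟨0, v, le_refl 0, by simpa using hs⟩
  | succ k ih =>
    intro ℓ v s hk hs
    obtain ⟨m, rfl⟩ : ∃ m, ℓ = m + 1 := ⟨ℓ - 1, by omega⟩
    rw [subsUpTo] at hs
    rcases List.mem_cons.1 hs with h | h
    · exact ⟨0, v, by omega, by simpa using h⟩
    · obtain ⟨c, hc, hs'⟩ := List.mem_flatMap.1 h
      rw [kids_augView] at hc
      obtain ⟨p, _, rfl⟩ := List.mem_map.1 hc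
      obtain ⟨d, u, hd, rfl⟩ := ih m (PG.nbr v p) s (by omega) hs'
      exact ⟨d + 1, u, by omega, by rw [show m + 1 - (d+1) = m - d from by omega]⟩

lemma mem_subsUpTo_of_dist : ∀ (j k ℓ : ℕ) (v u : Fin PG.n), PG.G.dist v u = j →
    j ≤ k → k ≤ ℓ →
    ∃ d, d ≤ k ∧ PG.augView (ℓ - d) u ∈ subsUpTo k (PG.augView ℓ v) := by
  intro j
  induction j with
  | zero =>
    intro k ℓ v u hj _ _
    have : v = u := (PG.conn.dist_eq_zero_iff).1 hj
    subst this
    exact ⟨0, by omega, by simpa using self_mem_subsUpTo k (PG.augView ℓ v)⟩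
  | succ j ih =>
    intro k ℓ v u hj hk hℓ
    obtain ⟨w, hadj, hw⟩ := PG.exists_adj_dist v u j hj
    obtain ⟨k', rfl⟩ : ∃ k', k = k' + 1 := ⟨k - 1, by omega⟩
    obtain ⟨m, rfl⟩ : ∃ m, ℓ = m + 1 := ⟨ℓ - 1, by omega⟩
    obtain ⟨d, hd, hmem⟩ := ih k' m w u hw (by omega) (by omega)
    have hplt : PG.portNum v w < PG.degree v := PG.portNum_lt v w hadj
    have hnb : PG.nbr v (PG.portNum v w) = w := PG.nbr_portNum v w hadj
    have hc : (PG.portNum (PG.nbr v (PG.portNum v w)) v,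
        PG.augView m (PG.nbr v (PG.portNum v w))) ∈ kids (PG.augView (m+1) v) := by
      rw [kids_augView]
      exact List.mem_map.2 ⟨PG.portNum v w, List.mem_range.2 hplt, rfl⟩
    refine ⟨d + 1, by omega, ?_⟩
    have hmem' : PG.augView (m + 1 - (d+1)) u ∈
        subsUpTo k' (PG.augView m (PG.nbr v (PG.portNum v w))) := by
      rw [hnb, show m + 1 - (d+1) = m - d from by omega]
      exact hmem
    exact mem_subsUpTo_step hc hmem'

end PortGraph


namespace PortGraph

/-! ### findSome? helpers -/

lemma range_findSome?_spec {β : Type} (f : ℕ → Option β) :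
    ∀ (n : ℕ) {b : β}, (List.range n).findSome? f = some b →
      ∃ i, i < n ∧ f i = some b ∧ ∀ j < i, f j = none := by
  intro n
  induction n with
  | zero => intro b h; simp at h
  | succ n ih =>
    intro b h
    rw [List.range_succ, List.findSome?_append] at h
    cases hfs : (List.range n).findSome? f with
    | some b' =>
      rw [hfs, Option.some_or] at h
      obtain ⟨i, hi, hfi, hmin⟩ := ih (hfs.trans h)
      exact ⟨i, by omega, hfi, hmin⟩
    | none =>
      rw [hfs] at h
      simp only [Option.none_or] at h
      simp only [List.findSome?_cons, List.findSome?_nil] at h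
      have hn : f n = some b := by
        cases hfn : f n with
        | none => rw [hfn] at h; simp at h
        | some b' => rw [hfn] at h; simpa using h
      refine ⟨n, by omega, hn, fun j hj => ?_⟩
      exact List.findSome?_eq_none_iff.1 hfs j (List.mem_range.2 hj)

/-! ### Correctness of the search -/

variable (PG : PortGraph)

lemma isPath_head {v : Fin PG.n} {s : List ℕ} {vs : List (Fin PG.n)}
    (h : PG.IsPath v s vs) : ∃ tl, vs = v :: tl := by
  cases h with
  | nil => exact ⟨[], rfl⟩
  | cons _ _ _ _ _ vs' _ _ _ _ => exact ⟨vs', rfl⟩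

lemma searchAt_sound {α : ℕ} (hinj : Function.Injective (PG.augView α))
    (leader : Fin PG.n) :
    ∀ (d ℓ : ℕ) (v : Fin PG.n) (s : List ℕ), d + α ≤ ℓ →
      searchAt α (PG.augView α leader) d (PG.augView ℓ v) = some s →
      ∃ vs, PG.IsPath v s vs ∧ vs.getLast? = some leader ∧
        (∀ x ∈ vs, PG.G.dist x leader ≤ d) ∧
        (PG.G.dist v leader = d → vs.Nodup) := by
  intro d
  induction d with
  | zero =>
    intro ℓ v s hℓ h
    rw [searchAt] at h
    split at h
    · rename_i hcond
      rw [PG.trunc_augView α ℓ v (by omega)] at hcond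
      have hv : v = leader := hinj hcond
      subst hv
      injection h with h'
      subst h'
      refine ⟨[v], IsPath.nil v, by simp, ?_, fun _ => by simp⟩
      intro x hx
      simp at hx
      subst hx
      simp [SimpleGraph.dist_self]
    · exact absurd h (by simp)
  | succ d ih =>
    intro ℓ v s hℓ h
    obtain ⟨m, rfl⟩ : ∃ m, ℓ = m + 1 := ⟨ℓ - 1, by omega⟩
    rw [searchAt] at h
    obtain ⟨p, hpmem, hfp⟩ := List.exists_of_findSome?_eq_some h
    have hplen : p < (kids (PG.augView (m+1) v)).length := List.mem_range.1 hpmem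
    have hplt : p < PG.degree v := by
      rw [kids_augView] at hplen
      simpa using hplen
    have hget : (kids (PG.augView (m+1) v)).getD p (0, AugView.leaf 0) =
        (PG.portNum (PG.nbr v p) v, PG.augView m (PG.nbr v p)) := by
      rw [kids_augView, List.getD_eq_getElem?_getD]
      rw [List.getElem?_eq_getElem (by simpa using hplt)]
      simp
    rw [hget] at hfp
    obtain ⟨r, hr, hs⟩ := Option.map_eq_some_iff.1 hfp
    obtain ⟨vs', hpath, hlast, hdistb, hnodup⟩ := ih m (PG.nbr v p) r (by omega) hr
    obtain ⟨tl, htl⟩ := PG.isPath_head hpath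
    have hadj : PG.G.Adj v (PG.nbr v p) := (PG.nbr_spec v p hplt).1
    have hport : PG.portNum v (PG.nbr v p) = p := (PG.nbr_spec v p hplt).2
    have humem : PG.nbr v p ∈ vs' := by rw [htl]; exact List.mem_cons_self
    have hudist : PG.G.dist (PG.nbr v p) leader ≤ d := hdistb _ humem
    have hdvu : PG.G.dist v (PG.nbr v p) ≤ 1 := by
      have := SimpleGraph.dist_le (SimpleGraph.Walk.cons hadj SimpleGraph.Walk.nil)
      simpa using this
    have htri : PG.G.dist v leader ≤ PG.G.dist v (PG.nbr v p) + PG.G.dist (PG.nbr v p) leader :=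
      PG.conn.dist_triangle
    refine ⟨v :: vs', ?_, ?_, ?_, ?_⟩
    · rw [← hs]
      exact IsPath.cons v (PG.nbr v p) p (PG.portNum (PG.nbr v p) v) r vs'
        hadj hport rfl hpath
    · rw [htl]
      rw [List.getLast?_cons_cons]
      rw [htl] at hlast
      exact hlast
    · intro x hx
      rcases List.mem_cons.1 hx with rfl | hx'
      · omega
      · exact le_trans (hdistb x hx') (by omega)
    · intro hdv
      have hud : PG.G.dist (PG.nbr v p) leader = d := by omega
      refine List.nodup_cons.2 ⟨?_, hnodup hud⟩
      intro hvmem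
      have := hdistb v hvmem
      omega

lemma searchAt_complete {α : ℕ} (leader : Fin PG.n) :
    ∀ (j ℓ : ℕ) (v : Fin PG.n), PG.G.dist v leader = j → j + α ≤ ℓ →
      ∃ r, searchAt α (PG.augView α leader) j (PG.augView ℓ v) = some r := by
  intro j
  induction j with
  | zero =>
    intro ℓ v hj hℓ
    have hv : v = leader := (PG.conn.dist_eq_zero_iff).1 hj
    subst hv
    rw [searchAt, if_pos (PG.trunc_augView α ℓ v (by omega))]
    exact ⟨[], rfl⟩
  | succ j ih =>
    intro ℓ v hj hℓ
    obtain ⟨m, rfl⟩ : ∃ m, ℓ = m + 1 := ⟨ℓ - 1, by omega⟩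
    obtain ⟨w, hadj, hw⟩ := PG.exists_adj_dist v leader j hj
    set p := PG.portNum v w with hp
    have hplt : p < PG.degree v := PG.portNum_lt v w hadj
    have hnb : PG.nbr v p = w := PG.nbr_portNum v w hadj
    obtain ⟨r, hr⟩ := ih m w hw (by omega)
    rw [searchAt]
    have hget : (kids (PG.augView (m+1) v)).getD p (0, AugView.leaf 0) =
        (PG.portNum (PG.nbr v p) v, PG.augView m (PG.nbr v p)) := by
      rw [kids_augView, List.getD_eq_getElem?_getD]
      rw [List.getElem?_eq_getElem (by simpa using hplt)]
      simp
    have hplen : p < (kids (PG.augView (m+1) v)).length := by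
      rw [kids_augView]; simpa using hplt
    have hfp : ((searchAt α (PG.augView α leader) j
          ((kids (PG.augView (m+1) v)).getD p (0, AugView.leaf 0)).2).map
        (fun r => p :: ((kids (PG.augView (m+1) v)).getD p (0, AugView.leaf 0)).1 :: r))
        = some (p :: PG.portNum (PG.nbr v p) v :: r) := by
      simp only [hget, hnb, hr, Option.map_some]
    cases hres : (List.range (kids (PG.augView (m+1) v)).length).findSome? _ with
    | some r' => exact ⟨r', rfl⟩
    | none =>
      have h1 : ((searchAt α (PG.augView α leader) j
            ((kids (PG.augView (m+1) v)).getD p (0, AugView.leaf 0)).2).map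
          (fun r => p :: ((kids (PG.augView (m+1) v)).getD p (0, AugView.leaf 0)).1 :: r))
          = none :=
        List.findSome?_eq_none_iff.1 hres p (List.mem_range.2 hplen)
      rw [hfp] at h1
      exact absurd h1 (by simp)

end PortGraph

/-- Leader election in time at most `D + φ^c` can be achieved with `O(log log log φ)`
bits of advice. -/
theorem advice_upper_bound_time_D_add_phi_pow_c (c : ℕ) (hc : 1 < c) :
    ∃ (C : ℝ) (A : PortGraph → List Bool)
      (f : List Bool → PortGraph.AugView → List ℕ), 0 < C ∧
      ∀ PG : PortGraph, PG.Feasible →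
        (((A PG).length : ℝ) ≤
          C * (1 + Real.logb 2 (1 + Real.logb 2 (1 + Real.logb 2 (PG.electionIndex : ℝ))))) ∧
        PG.IsLeaderElection
          (fun v => f (A PG) (PG.augView (PG.diam + PG.electionIndex ^ c) v)) := by
  classical
  refine ⟨10, fun PG => enc (adviceNat PG.electionIndex), PortGraph.run, by norm_num, ?_⟩
  intro PG hF
  refine ⟨adviceNat_length _, ?_⟩
  rw [PortGraph.IsLeaderElection]
  set φ := PG.electionIndex with hφ
  set α := decA (adviceNat φ) with hα
  have hinjφ : Function.Injective (PG.augView φ) := Nat.sInf_mem hF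
  have hφα : φ ≤ α := le_decA φ
  have hαφc : α ≤ φ ^ c := decA_le φ c (by omega)
  have hinjα : Function.Injective (PG.augView α) := PG.injective_mono hφα hinjφ
  set L := PG.diam + φ ^ c with hL
  have hαL : α ≤ L := by omega
  have hset : ∀ v : Fin PG.n,
      {x : PortGraph.AugView | x ∈ (PortGraph.subsUpTo (L - α) (PG.augView L v)).map
        (PortGraph.trunc α)} = Set.range (PG.augView α) := by
    intro v
    ext x
    simp only [Set.mem_setOf_eq, List.mem_map, Set.mem_range]
    constructor
    · rintro ⟨s, hs, rfl⟩
      obtain ⟨d, u, hd, rfl⟩ := PG.subsUpTo_subset (L - α) L v s (by omega) hs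
      exact ⟨u, (PG.trunc_augView α (L - d) u (by omega)).symm⟩
    · rintro ⟨u, rfl⟩
      obtain ⟨d, hd, hmem⟩ := PG.mem_subsUpTo_of_dist (PG.G.dist v u) (L - α) L v u rfl
        (le_trans (PG.dist_le_diam v u) (by omega)) (by omega)
      exact ⟨PG.augView (L - d) u, hmem, PG.trunc_augView α (L - d) u (by omega)⟩
  haveI : Nonempty (Fin PG.n) := ⟨⟨0, by have := PG.three_le; omega⟩⟩
  have hne : (Set.range (PG.augView α)).Nonempty := Set.range_nonempty _
  obtain ⟨leader, hleader⟩ : ∃ u, PG.augView α u =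
      WellFounded.min
        (IsWellFounded.wf (r := (WellOrderingRel : PortGraph.AugView → PortGraph.AugView → Prop)))
        (Set.range (PG.augView α)) hne := by
    obtain ⟨u, hu⟩ := WellFounded.min_mem
      (IsWellFounded.wf (r := (WellOrderingRel : PortGraph.AugView → PortGraph.AugView → Prop)))
      (Set.range (PG.augView α)) hne
    exact ⟨u, hu⟩
  refine ⟨leader, fun v => ?_⟩
  show ∃ vs, PG.IsPath v (PortGraph.run (enc (adviceNat φ)) (PG.augView L v)) vs ∧
    vs.Nodup ∧ vs.getLast? = some leader
  have hαa : decA (dec (enc (adviceNat φ))) = α := by rw [dec_enc]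
  have hlh : PortGraph.lheight (PG.augView L v) = L := PG.lheight_augView L v
  rw [PortGraph.run_eq (enc (adviceNat φ)) (PG.augView L v) α (L - α) hαa
    (by rw [hlh]) (Set.range (PG.augView α)) (hset v) hne]
  rw [← hleader]
  set j := PG.G.dist v leader with hj
  have hjD : j ≤ PG.diam := PG.dist_le_diam v leader
  obtain ⟨r, hr⟩ := PG.searchAt_complete (α := α) leader j L v rfl (by omega)
  cases hfs : (List.range (L - α + 1)).findSome?
      (fun d => PortGraph.searchAt α (PG.augView α leader) d (PG.augView L v)) with
  | none =>
    have h1 : PortGraph.searchAt α (PG.augView α leader) j (PG.augView L v) = none :=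
      List.findSome?_eq_none_iff.1 hfs j (List.mem_range.2 (by omega))
    rw [hr] at h1
    exact absurd h1 (by simp)
  | some s =>
    obtain ⟨i, hin, hfi, hmin⟩ := PortGraph.range_findSome?_spec _ _ hfs
    have hij : i ≤ j := by
      by_contra hcon
      push_neg at hcon
      have h2 := hmin j hcon
      rw [hr] at h2
      exact absurd h2 (by simp)
    obtain ⟨vs, hpath, hlast, hdistb, hnodup⟩ :=
      PG.searchAt_sound hinjα leader i L v s (by omega) hfi
    obtain ⟨tl, htl⟩ := PG.isPath_head hpath
    have hvmem : v ∈ vs := by rw [htl]; exact List.mem_cons_self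
    have hji : j ≤ i := hdistb v hvmem
    have hieq : i = j := le_antisymm hij hji
    exact ⟨vs, by simpa using hpath, hnodup (by omega), hlast⟩

end Election
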